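/- Under the hypotheses that each U_e is differentiable, strongly convex with unique minimizer b_e, U_e(b_e) = 0, and b ∈ image(δ), trajectories of the gradient flow ẋ = −α L_F^{∇U} x (for any diffusivity α > 0) converge to the orthogonal projection of the initial condition onto the affine set δ⁺b + ker δ = ker L_F^{∇U}. -/

import Mathlib

/-!
STATEMENT 10: Under differentiable, strongly convex edge potentials with unique
minimizers b_e of value 0 and b ∈ image(δ), trajectories of the gradient flow
ẋ = −α L_F^{∇U} x (α > 0) converge to the orthogonal projection of the initial
condition onto the affine set δ⁺b + ker δ, namely to x(0)^‖ + δ⁺b.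
-/

open Filter
open scoped RealInnerProductSpace

variable {C0 : Type*} [NormedAddCommGroup C0] [InnerProductSpace ℝ C0] [FiniteDimensional ℝ C0]
variable {E : Type*} [Fintype E]
variable (Es : E → Type*) [∀ e, NormedAddCommGroup (Es e)] [∀ e, InnerProductSpace ℝ (Es e)]
  [∀ e, FiniteDimensional ℝ (Es e)]

section AuxLemmas
open scoped RealInnerProductSpace






lemma convex_first_order {F : Type*} [NormedAddCommGroup F] [InnerProductSpace ℝ F] [CompleteSpace F]
    {f : F → ℝ} (hf : ConvexOn ℝ Set.univ f) {z g : F} (hg : HasGradientAt f g z) (w : F) :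
    f z + ⟪g, w - z⟫ ≤ f w := by
  have hc : HasDerivAt (fun s : ℝ => (AffineMap.lineMap z w) s) (w - z) 0 := by
    simp only [AffineMap.lineMap_apply, vsub_eq_sub, vadd_eq_add]
    simpa using ((hasDerivAt_id (0:ℝ)).smul_const (w - z)).add_const z
  have hF : HasFDerivAt f (InnerProductSpace.toDual ℝ F g) z :=
    hasGradientAt_iff_hasFDerivAt.mp hg
  have hF' : HasFDerivAt f (InnerProductSpace.toDual ℝ F g) ((AffineMap.lineMap z w) (0:ℝ)) := by
    simpa using hF
  have hφ : HasDerivAt (fun s : ℝ => f ((AffineMap.lineMap z w) s)) ⟪g, w - z⟫ 0 := by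
    have := hF'.comp_hasDerivAt (0:ℝ) hc
    simpa [InnerProductSpace.toDual_apply_apply, Function.comp_def] using this
  have hφc : ConvexOn ℝ Set.univ (fun s : ℝ => f ((AffineMap.lineMap z w) s)) := by
    have := hf.comp_affineMap (AffineMap.lineMap z w)
    simpa [Function.comp_def] using this
  have hs := hφc.le_slope_of_hasDerivAt (Set.mem_univ (0:ℝ)) (Set.mem_univ (1:ℝ)) one_pos hφ
  rw [slope_def_field] at hs
  simp [AffineMap.lineMap_apply_one, AffineMap.lineMap_apply_zero] at hs
  linarith




lemma strong_min_grad {F : Type*} [NormedAddCommGroup F] [InnerProductSpace ℝ F] [CompleteSpace F]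
    {f : F → ℝ} {g b z : F} {m : ℝ} (hm : 0 < m)
    (hsc : StrongConvexOn Set.univ m f)
    (hgrad : HasGradientAt f g z) (hbmin : IsMinOn f Set.univ b) :
    m / 4 * ‖z - b‖ ^ 2 ≤ ⟪g, z - b⟫ := by
  have hmid := hsc.2 (Set.mem_univ z) (Set.mem_univ b)
    (by norm_num : (0:ℝ) ≤ 1/2) (by norm_num : (0:ℝ) ≤ 1/2) (by norm_num)
  have hminmid : f b ≤ f ((1/2 : ℝ) • z + (1/2 : ℝ) • b) := hbmin (Set.mem_univ _)
  have hconv : ConvexOn ℝ Set.univ f := hsc.convexOn (fun r => by positivity)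
  have hfo : f z + ⟪g, b - z⟫ ≤ f b := convex_first_order hconv hgrad b
  have hneg : ⟪g, b - z⟫ = -⟪g, z - b⟫ := by
    rw [show b - z = -(z - b) by abel, inner_neg_right]
  rw [hneg] at hfo
  simp only [smul_eq_mul] at hmid
  nlinarith [hmid, hminmid, hfo]




lemma exists_antilip {C0 C1 : Type*} [NormedAddCommGroup C0] [InnerProductSpace ℝ C0]
    [FiniteDimensional ℝ C0] [NormedAddCommGroup C1] [InnerProductSpace ℝ C1]
    (δ : C0 →ₗ[ℝ] C1) :
    ∃ c : ℝ, 0 < c ∧ ∀ v ∈ (LinearMap.ker δ)ᗮ, ‖v‖ ≤ c * ‖δ v‖ := by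
  set K := LinearMap.ker δ with hK
  let T : Kᗮ →ₗ[ℝ] C1 := δ.comp Kᗮ.subtype
  have hinj : Function.Injective T := by
    rw [← LinearMap.ker_eq_bot]
    rw [Submodule.eq_bot_iff]
    rintro ⟨v, hv⟩ hvker
    have hvK : v ∈ K := by
      simpa [T, hK, LinearMap.mem_ker] using hvker
    have : ⟪v, v⟫ = 0 := hv v hvK
    have : v = 0 := by rwa [inner_self_eq_zero] at this
    simpa [Submodule.mk_eq_zero] using this
  let e := LinearEquiv.ofInjective T hinj
  let e' := e.toContinuousLinearEquiv
  set C := ‖(e'.symm : LinearMap.range T →L[ℝ] Kᗮ)‖ with hC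
  refine ⟨C + 1, by positivity, fun v hv => ?_⟩
  set vv : Kᗮ := ⟨v, hv⟩ with hvv
  have h1 : vv = e'.symm (e' vv) := by simp
  have h2 : ‖(e'.symm (e' vv) : Kᗮ)‖ ≤ C * ‖e' vv‖ :=
    (e'.symm : LinearMap.range T →L[ℝ] Kᗮ).le_opNorm (e' vv)
  have h3 : ‖e' vv‖ = ‖δ v‖ := by
    have : ((e' vv : LinearMap.range T) : C1) = δ v := by
      simp [e', e, T, LinearEquiv.ofInjective_apply, hvv]
    rw [← this]
    rfl
  have h4 : ‖v‖ = ‖vv‖ := rfl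
  have h5 : ‖vv‖ ≤ C * ‖δ v‖ := by rw [h1, ← h3]; exact h2
  have : (0:ℝ) ≤ ‖δ v‖ := norm_nonneg _
  nlinarith [h4, h5]


end AuxLemmas

/-- `δ⁺ b` for `b ∈ image δ`: the unique preimage of `b` lying in `(ker δ)ᗮ = image δᵀ`,
i.e. the Moore–Penrose pseudoinverse applied to `b`. -/
noncomputable def pinvVec {C1 : Type*} [NormedAddCommGroup C1] [InnerProductSpace ℝ C1]
    (δ : C0 →ₗ[ℝ] C1) (b : C1) (hb : b ∈ LinearMap.range δ) : C0 :=
  (Submodule.orthogonalProjectionOnto (LinearMap.ker δ)ᗮ hb.choose : C0)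

theorem gradient_flow_converges_to_projection
    (δ : C0 →ₗ[ℝ] PiLp 2 Es)
    (Ue : ∀ e, Es e → ℝ) (gUe : ∀ e, Es e → Es e) (b : ∀ e, Es e)
    (m : E → ℝ) (hm : ∀ e, 0 < m e)
    (hsc : ∀ e, StrongConvexOn Set.univ (m e) (Ue e))
    (hgrad : ∀ e (y : Es e), HasGradientAt (Ue e) (gUe e y) y)
    (hbmin : ∀ e, IsMinOn (Ue e) Set.univ (b e))
    (hb0 : ∀ e, Ue e (b e) = 0)
    (hrange : (WithLp.equiv 2 (∀ e, Es e)).symm b ∈ LinearMap.range δ)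
    (α : ℝ) (hα : 0 < α)
    (x : ℝ → C0)
    (hx : ∀ t : ℝ, HasDerivAt x
      (-(α • (LinearMap.adjoint δ
        ((WithLp.equiv 2 (∀ e, Es e)).symm (fun e => gUe e ((δ (x t)) e)))))) t) :
    Tendsto x atTop (nhds
      ((Submodule.orthogonalProjectionOnto (LinearMap.ker δ) (x 0) : C0) +
        pinvVec δ ((WithLp.equiv 2 (∀ e, Es e)).symm b) hrange)) := by
  classical
  set K := LinearMap.ker δ with hKdef
  set b' : PiLp 2 Es := (WithLp.equiv 2 (∀ e, Es e)).symm b with hb'def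
  set p : C0 := pinvVec δ b' hrange with hpdef
  set L : C0 := (Submodule.orthogonalProjectionOnto K (x 0) : C0) + p with hLdef
  set w : ℝ → PiLp 2 Es :=
    fun t => (WithLp.equiv 2 (∀ e, Es e)).symm (fun e => gUe e ((δ (x t)) e)) with hwdef
  set v : ℝ → C0 := fun t => -(α • (LinearMap.adjoint δ (w t))) with hvdef
  -- a uniform lower bound for m
  obtain ⟨m₀, hm₀, hm₀le⟩ : ∃ m₀ : ℝ, 0 < m₀ ∧ ∀ e, m₀ ≤ m e := by
    cases isEmpty_or_nonempty E with
    | inl h => exact ⟨1, one_pos, fun e => (h.elim e)⟩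
    | inr h =>
      refine ⟨Finset.univ.inf' Finset.univ_nonempty m, ?_,
        fun e => Finset.inf'_le m (Finset.mem_univ e)⟩
      obtain ⟨e, -, he⟩ := Finset.exists_mem_eq_inf' Finset.univ_nonempty m
      rw [he]; exact hm e
  -- antilipschitz constant
  obtain ⟨c, hc, hcle⟩ := exists_antilip δ
  -- δ p = b'
  have hδp : δ p = b' := by
    have hc0 : δ hrange.choose = b' := hrange.choose_spec
    have hmem : hrange.choose - (Submodule.orthogonalProjectionOnto Kᗮ hrange.choose : C0) ∈ Kᗮᗮ :=
      Submodule.sub_starProjection_mem_orthogonal (K := Kᗮ) hrange.choose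
    rw [Submodule.orthogonal_orthogonal] at hmem
    have h0 : δ (hrange.choose - (Submodule.orthogonalProjectionOnto Kᗮ hrange.choose : C0)) = 0 :=
      LinearMap.mem_ker.mp hmem
    have : δ p = δ hrange.choose - δ (hrange.choose - (Submodule.orthogonalProjectionOnto Kᗮ hrange.choose : C0)) := by
      rw [← map_sub]
      congr 1
      simp [hpdef, pinvVec, hKdef]
    rw [this, h0, hc0, sub_zero]
  -- the projection of x t onto K is constant
  have hinner_const : ∀ u ∈ K, ∀ t : ℝ, ⟪x t, u⟫ = ⟪x 0, u⟫ := by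
    intro u hu t
    have hd : ∀ s : ℝ, HasDerivAt (fun s => ⟪x s, u⟫) 0 s := by
      intro s
      have := (hx s).inner ℝ (hasDerivAt_const s u)
      have hz : ⟪x s, (0 : C0)⟫ + ⟪v s, u⟫ = 0 := by
        have : ⟪v s, u⟫ = 0 := by
          rw [hvdef]
          simp only [inner_neg_left, real_inner_smul_left, LinearMap.adjoint_inner_left]
          rw [LinearMap.mem_ker.mp hu]
          simp
        simp [this]
      rw [← hz]
      exact this
    have hdiff : Differentiable ℝ (fun s => ⟪x s, u⟫) := fun s => (hd s).differentiableAt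
    have hderiv : ∀ s, deriv (fun s => ⟪x s, u⟫) s = 0 := fun s => (hd s).deriv
    exact is_const_of_deriv_eq_zero hdiff hderiv t 0
  -- y t := x t - L lies in Kᗮ
  set y : ℝ → C0 := fun t => x t - L with hydef
  have hyorth : ∀ t, y t ∈ Kᗮ := by
    intro t
    have h1 : x t - x 0 ∈ Kᗮ := by
      rw [Submodule.mem_orthogonal]
      intro u hu
      rw [real_inner_comm, inner_sub_left, hinner_const u hu t, sub_self]
    have h2 : x 0 - (Submodule.orthogonalProjectionOnto K (x 0) : C0) ∈ Kᗮ :=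
      Submodule.sub_starProjection_mem_orthogonal (x 0)
    have h3 : p ∈ Kᗮ := by
      rw [hpdef, pinvVec]
      exact SetLike.coe_mem _
    have : y t = (x t - x 0) + (x 0 - (Submodule.orthogonalProjectionOnto K (x 0) : C0)) - p := by
      rw [hydef, hLdef]; abel
    rw [this]
    exact Submodule.sub_mem _ (Submodule.add_mem _ h1 h2) h3
  have hδL : δ L = b' := by
    have : δ ((Submodule.orthogonalProjectionOnto K (x 0) : C0)) = 0 :=
      LinearMap.mem_ker.mp (SetLike.coe_mem _)
    rw [hLdef, map_add, this, hδp, zero_add]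
  have hδy : ∀ t, δ (y t) = δ (x t) - b' := by
    intro t; rw [hydef]; simp [map_sub, hδL]
  -- derivative of y
  have hy' : ∀ t, HasDerivAt y (v t) t := fun t => (hx t).sub_const L
  -- key inner product inequality
  set k : ℝ := α * (m₀ / 4) / c ^ 2 with hkdef
  have hk : 0 < k := by positivity
  have hkey : ∀ t, ⟪y t, v t⟫ ≤ -k * ⟪y t, y t⟫ := by
    intro t
    have hA : ⟪y t, v t⟫ = -(α * ⟪δ (y t), w t⟫) := by
      rw [hvdef]
      simp only [inner_neg_right, real_inner_smul_right, LinearMap.adjoint_inner_right]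
    have hsum : ⟪δ (y t), w t⟫ = ∑ e, ⟪(δ (x t)) e - b e, gUe e ((δ (x t)) e)⟫ := by
      rw [PiLp.inner_apply]
      apply Finset.sum_congr rfl
      intro e _
      rw [hδy t]
      simp [hb'def, hwdef, WithLp.equiv_symm_apply, PiLp.toLp_apply]
    have hterm : ∀ e, m₀ / 4 * ‖(δ (x t)) e - b e‖ ^ 2 ≤
        ⟪(δ (x t)) e - b e, gUe e ((δ (x t)) e)⟫ := by
      intro e
      have h1 := strong_min_grad (hm e) (hsc e) (hgrad e ((δ (x t)) e)) (hbmin e)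
      have h2 : m₀ / 4 * ‖(δ (x t)) e - b e‖ ^ 2 ≤ m e / 4 * ‖(δ (x t)) e - b e‖ ^ 2 :=
        mul_le_mul_of_nonneg_right (by linarith [hm₀le e]) (sq_nonneg _)
      rw [real_inner_comm]
      exact h2.trans h1
    have hnormsq : ∑ e, ‖(δ (x t)) e - b e‖ ^ 2 = ‖δ (y t)‖ ^ 2 := by
      rw [PiLp.norm_sq_eq_of_L2]
      apply Finset.sum_congr rfl
      intro e _
      rw [hδy t]
      simp [hb'def, WithLp.equiv_symm_apply, PiLp.toLp_apply]
    have hsumlb : m₀ / 4 * ‖δ (y t)‖ ^ 2 ≤ ⟪δ (y t), w t⟫ := by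
      rw [hsum, ← hnormsq, Finset.mul_sum]
      exact Finset.sum_le_sum fun e _ => hterm e
    have hanti : ‖y t‖ ≤ c * ‖δ (y t)‖ := hcle (y t) (hyorth t)
    have hnorm2 : ‖y t‖ ^ 2 ≤ c ^ 2 * ‖δ (y t)‖ ^ 2 := by
      have h := pow_le_pow_left₀ (norm_nonneg (y t)) hanti 2
      rwa [mul_pow] at h
    have hys : ⟪y t, y t⟫ = ‖y t‖ ^ 2 := real_inner_self_eq_norm_sq (y t)
    rw [hA, hys]
    have hkc : k * c ^ 2 = α * (m₀ / 4) := by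
      rw [hkdef]; field_simp
    have hstep : k * ‖y t‖ ^ 2 ≤ α * (m₀ / 4 * ‖δ (y t)‖ ^ 2) := by
      calc k * ‖y t‖ ^ 2 ≤ k * (c ^ 2 * ‖δ (y t)‖ ^ 2) :=
            mul_le_mul_of_nonneg_left hnorm2 hk.le
        _ = α * (m₀ / 4 * ‖δ (y t)‖ ^ 2) := by rw [← mul_assoc, hkc]; ring
    have hfin : k * ‖y t‖ ^ 2 ≤ α * ⟪δ (y t), w t⟫ :=
      hstep.trans (mul_le_mul_of_nonneg_left hsumlb hα.le)
    linarith [hfin]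
  -- Lyapunov / Gronwall argument
  set φ : ℝ → ℝ := fun t => ⟪y t, y t⟫ with hφdef
  have hφ' : ∀ t, HasDerivAt φ (2 * ⟪y t, v t⟫) t := by
    intro t
    have := (hy' t).inner ℝ (hy' t)
    have h2 : ⟪y t, v t⟫ + ⟪v t, y t⟫ = 2 * ⟪y t, v t⟫ := by
      rw [real_inner_comm (v t) (y t)]; ring
    rw [← h2]
    exact this
  have hφnn : ∀ t, 0 ≤ φ t := fun t => real_inner_self_nonneg
  set h : ℝ → ℝ := fun t => φ t * Real.exp (2 * k * t) with hhdef
  have hh' : ∀ t, HasDerivAt h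
      (2 * ⟪y t, v t⟫ * Real.exp (2 * k * t) + φ t * (Real.exp (2 * k * t) * (2 * k))) t := by
    intro t
    have hexp : HasDerivAt (fun t : ℝ => Real.exp (2 * k * t)) (Real.exp (2 * k * t) * (2 * k)) t := by
      have h1 : HasDerivAt (fun t : ℝ => 2 * k * t) (2 * k) t := by
        simpa using (hasDerivAt_id t).const_mul (2 * k)
      simpa [Function.comp_def] using (Real.hasDerivAt_exp (2 * k * t)).comp t h1
    exact (hφ' t).mul hexp
  have hderiv_nonpos : ∀ t, deriv h t ≤ 0 := by
    intro t
    rw [(hh' t).deriv]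
    have h1 : 2 * ⟪y t, v t⟫ ≤ 2 * (-k * φ t) := by
      have := hkey t
      linarith
    have hexppos : 0 < Real.exp (2 * k * t) := Real.exp_pos _
    nlinarith [hφnn t]
  have hanti : Antitone h :=
    antitone_of_deriv_nonpos (fun t => (hh' t).differentiableAt) hderiv_nonpos
  have hφbound : ∀ t : ℝ, 0 ≤ t → φ t ≤ φ 0 * Real.exp (-(2 * k * t)) := by
    intro t ht
    have h1 : h t ≤ h 0 := hanti ht
    have h2 : φ t = h t * Real.exp (-(2 * k * t)) := by
      rw [hhdef]
      simp [mul_assoc, ← Real.exp_add]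
    have h3 : h 0 = φ 0 := by simp [hhdef]
    rw [h2, ← h3]
    exact mul_le_mul_of_nonneg_right h1 (Real.exp_pos _).le
  have hexp0 : Tendsto (fun t : ℝ => φ 0 * Real.exp (-(2 * k * t))) atTop (nhds 0) := by
    have h1 : Tendsto (fun t : ℝ => 2 * k * t) atTop atTop :=
      Tendsto.const_mul_atTop (by positivity) tendsto_id
    have h2 : Tendsto (fun t : ℝ => Real.exp (-(2 * k * t))) atTop (nhds 0) :=
      Real.tendsto_exp_neg_atTop_nhds_zero.comp h1
    simpa using h2.const_mul (φ 0)
  have hφ0 : Tendsto φ atTop (nhds 0) := by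
    apply squeeze_zero' (Eventually.of_forall hφnn) _ hexp0
    filter_upwards [eventually_ge_atTop (0:ℝ)] with t ht
    exact hφbound t ht
  have hynorm : Tendsto (fun t => ‖y t‖) atTop (nhds 0) := by
    have hs : Tendsto (fun t => Real.sqrt (φ t)) atTop (nhds 0) := by
      have := (Real.continuous_sqrt.tendsto 0).comp hφ0
      simpa [Function.comp_def] using this
    refine hs.congr fun t => ?_
    rw [hφdef]
    simp only [real_inner_self_eq_norm_sq]
    exact Real.sqrt_sq (norm_nonneg _)
  have hy0 : Tendsto y atTop (nhds 0) := tendsto_zero_iff_norm_tendsto_zero.mpr hynorm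
  simpa [hydef] using hy0.add_const L
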